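/- Let L: tCH2 -> CH2 be the Z-linear map sending th_i to sgn(i+1)*h_{tau(i)}, where tau(i) = |i+1|-1, sgn(0) = 0, h_j denotes the basis of CH2 for j >= 0, and we interpret sgn(i+1)*h_{tau(i)} as 0 when i = -1. Then L is a ring homomorphism: L(x*y) = L(x)*L(y) for all x, y in tCH2. -/

import Mathlib

def tau (i : ℤ) : ℤ := |i + 1| - 1

/-- Basis element `th_i` of the free ℤ-module `tCH2 = ℤ →₀ ℤ`. -/
noncomputable def th (i : ℤ) : ℤ →₀ ℤ := Finsupp.single i 1

/-- Product of basis elements of `tCH2`: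
`th_{-1} th_j = 0`; `th_i th_j = ∑_{k=0}^i th_{j-i+2k}` for `i ≥ 0`;
`th_i th_j = -(th_{tau i} th_j)` for `i < -1` (note `tau i ≥ 0` there). -/
noncomputable def thMulB (i j : ℤ) : ℤ →₀ ℤ :=
  if i = -1 then 0
  else if 0 ≤ i then
    ∑ k ∈ Finset.range (i.toNat + 1), Finsupp.single (j - i + 2 * (k : ℤ)) (1 : ℤ)
  else
    -(∑ k ∈ Finset.range ((tau i).toNat + 1),
        Finsupp.single (j - tau i + 2 * (k : ℤ)) (1 : ℤ))

/-- The bilinear extension of `thMulB` to all of `tCH2`. -/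
noncomputable def tmul (x y : ℤ →₀ ℤ) : ℤ →₀ ℤ :=
  x.sum fun i a => y.sum fun j b => (a * b) • thMulB i j

/-- Basis element `h_i` of the free ℤ-module `CH2 = ℕ →₀ ℤ`. -/
noncomputable def hb (i : ℕ) : ℕ →₀ ℤ := Finsupp.single i 1

/-- Product of basis elements of `CH2`: `h_i h_j = ∑_{k=0}^{min i j} h_{|j-i|+2k}`. -/
noncomputable def hMulB (i j : ℕ) : ℕ →₀ ℤ :=
  ∑ k ∈ Finset.range (min i j + 1), Finsupp.single (max i j - min i j + 2 * k) (1 : ℤ)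

/-- The bilinear extension of `hMulB` to all of `CH2`. -/
noncomputable def hmul (x y : ℕ →₀ ℤ) : ℕ →₀ ℤ :=
  x.sum fun i a => y.sum fun j b => (a * b) • hMulB i j

/-- The linear map `L : tCH2 → CH2`, `th_i ↦ sgn(i+1) • h_{tau i}`. -/
noncomputable def Lmap (x : ℤ →₀ ℤ) : ℕ →₀ ℤ :=
  x.sum fun i a => (a * (i + 1).sign) • Finsupp.single (tau i).toNat (1 : ℤ)

/-! ### Auxiliary definitions and lemmas -/

noncomputable def Fb (m : ℤ) : ℕ →₀ ℤ := (m + 1).sign • Finsupp.single (tau m).toNat 1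

lemma Fb_reflect (m : ℤ) : Fb (-2 - m) = -Fb m := by
  unfold Fb tau
  have h1 : -2 - m + 1 = -(m + 1) := by ring
  rw [h1, Int.sign_neg, abs_neg, neg_smul]

lemma Fb_nonneg (m : ℤ) (hm : 0 ≤ m) : Fb m = Finsupp.single m.toNat 1 := by
  unfold Fb tau
  rw [abs_of_nonneg (by omega), Int.sign_eq_one_of_pos (by omega), one_smul]
  congr 1
  omega

lemma neg_self_zero {S : ℕ →₀ ℤ} (h : S = -S) : S = 0 := by
  have h2 : (2 : ℤ) • S = 0 := by
    rw [two_smul]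
    nth_rewrite 1 [h]
    exact neg_add_cancel S
  rcases smul_eq_zero.mp h2 with h3 | h3
  · exact absurd h3 (by norm_num)
  · exact h3

lemma sum_Fb_zero (d : ℕ) : ∑ k ∈ Finset.range d, Fb (-(d : ℤ) + 2 * k) = 0 := by
  apply neg_self_zero
  rw [← Finset.sum_neg_distrib]
  rw [← Finset.sum_range_reflect (fun k => Fb (-(d : ℤ) + 2 * k)) d]
  apply Finset.sum_congr rfl
  intro k hk
  rw [Finset.mem_range] at hk
  have h : -(d : ℤ) + 2 * ((d - 1 - k : ℕ) : ℤ) = -2 - (-(d : ℤ) + 2 * k) := by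
    omega
  rw [h, Fb_reflect]

lemma claimA_nn (n : ℕ) (j : ℤ) (hj : 0 ≤ j) :
    ∑ k ∈ Finset.range (n + 1), Fb (j - n + 2 * k) = hMulB n j.toNat := by
  rcases le_or_gt (n : ℤ) j with hnj | hnj
  · unfold hMulB
    rw [min_eq_left (by omega), max_eq_right (by omega)]
    apply Finset.sum_congr rfl
    intro k hk
    rw [Fb_nonneg _ (by omega)]
    congr 1
    omega
  · have hd : n + 1 = (n - j.toNat) + (j.toNat + 1) := by omega
    rw [hd, Finset.sum_range_add]
    have h1 : ∑ k ∈ Finset.range (n - j.toNat), Fb (j - n + 2 * k) = 0 := by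
      rw [← sum_Fb_zero (n - j.toNat)]
      apply Finset.sum_congr rfl
      intro k hk
      congr 1
      omega
    rw [h1, zero_add]
    unfold hMulB
    rw [min_eq_right (by omega), max_eq_left (by omega)]
    apply Finset.sum_congr rfl
    intro k hk
    rw [Fb_nonneg _ (by push_cast; omega)]
    congr 1
    push_cast
    omega

lemma claimA (n : ℕ) (j : ℤ) :
    ∑ k ∈ Finset.range (n + 1), Fb (j - n + 2 * k)
      = (j + 1).sign • hMulB n (tau j).toNat := by
  rcases le_or_gt 0 j with hj | hj
  · have ht : tau j = j := by
      unfold tau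
      rw [abs_of_nonneg (by omega)]
      ring
    rw [ht, Int.sign_eq_one_of_pos (by omega), one_smul]
    exact claimA_nn n j hj
  · have hrefl : ∑ k ∈ Finset.range (n + 1), Fb (j - n + 2 * k)
        = -∑ k ∈ Finset.range (n + 1), Fb ((-2 - j) - n + 2 * k) := by
      rw [← Finset.sum_neg_distrib]
      rw [← Finset.sum_range_reflect (fun k => -Fb ((-2 - j) - n + 2 * k)) (n + 1)]
      apply Finset.sum_congr rfl
      intro k hk
      rw [Finset.mem_range] at hk
      have h : (-2 - j) - n + 2 * ((n + 1 - 1 - k : ℕ) : ℤ) = -2 - (j - n + 2 * k) := by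
        push_cast
        omega
      rw [h, Fb_reflect, neg_neg]
    rcases eq_or_lt_of_le (by omega : j ≤ -1) with h1 | h1
    · rw [h1] at hrefl ⊢
      norm_num
      apply neg_self_zero
      convert hrefl using 3
      congr 1
    · rw [hrefl, claimA_nn n (-2 - j) (by omega)]
      have ht : tau j = -2 - j := by
        unfold tau
        rw [abs_of_neg (by omega)]
        ring
      have hs : (j + 1).sign = -1 := Int.sign_eq_neg_one_of_neg (by omega)
      rw [hs, ht, neg_one_smul]

/-! ### `Lmap` as a linear map -/

lemma Lmap_eq (x : ℤ →₀ ℤ) : Lmap x = Finsupp.linearCombination ℤ Fb x := by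
  rw [Finsupp.linearCombination_apply]
  unfold Lmap Fb
  exact Finsupp.sum_congr fun i _ => mul_smul _ _ _

lemma Lmap_zero : Lmap 0 = 0 := by rw [Lmap_eq, map_zero]

lemma Lmap_add (x y : ℤ →₀ ℤ) : Lmap (x + y) = Lmap x + Lmap y := by
  rw [Lmap_eq, Lmap_eq, Lmap_eq, map_add]

lemma Lmap_smul (c : ℤ) (x : ℤ →₀ ℤ) : Lmap (c • x) = c • Lmap x := by
  rw [Lmap_eq, Lmap_eq, map_smul]

lemma Lmap_neg (x : ℤ →₀ ℤ) : Lmap (-x) = -Lmap x := by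
  rw [Lmap_eq, Lmap_eq, map_neg]

lemma Lmap_sum (s : Finset ℕ) (f : ℕ → ℤ →₀ ℤ) :
    Lmap (∑ k ∈ s, f k) = ∑ k ∈ s, Lmap (f k) := by
  rw [Lmap_eq, map_sum]
  exact Finset.sum_congr rfl fun k _ => (Lmap_eq (f k)).symm

lemma Lmap_th (m : ℤ) : Lmap (Finsupp.single m 1) = Fb m := by
  rw [Lmap_eq, Finsupp.linearCombination_single, one_smul]

lemma Lmap_single (i a : ℤ) :
    Lmap (Finsupp.single i a) = Finsupp.single (tau i).toNat (a * (i + 1).sign) := by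
  rw [Lmap_eq, Finsupp.linearCombination_single]
  unfold Fb
  rw [smul_smul, Finsupp.smul_single', mul_one]

/-! ### The key identity on basis elements -/

lemma key (i j : ℤ) :
    Lmap (thMulB i j)
      = ((i + 1).sign * (j + 1).sign) • hMulB (tau i).toNat (tau j).toNat := by
  unfold thMulB
  split_ifs with h1 h2
  · rw [Lmap_zero, h1]
    norm_num
  · rw [Lmap_sum]
    have e : ∀ k ∈ Finset.range (i.toNat + 1),
        Lmap (Finsupp.single (j - i + 2 * (k : ℤ)) 1) = Fb (j - (i.toNat : ℕ) + 2 * k) := by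
      intro k _
      rw [Lmap_th]
      congr 1
      omega
    rw [Finset.sum_congr rfl e, claimA]
    have ht : tau i = i := by
      unfold tau
      rw [abs_of_nonneg (by omega)]
      ring
    rw [Int.sign_eq_one_of_pos (by omega : (0:ℤ) < i + 1), one_mul, ht]
  · have hti : tau i = -2 - i := by
      unfold tau
      rw [abs_of_neg (by omega)]
      ring
    rw [Lmap_neg, Lmap_sum]
    have e : ∀ k ∈ Finset.range ((tau i).toNat + 1),
        Lmap (Finsupp.single (j - tau i + 2 * (k : ℤ)) 1)
          = Fb (j - ((tau i).toNat : ℕ) + 2 * k) := by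
      intro k _
      rw [Lmap_th]
      congr 1
      rw [hti]
      omega
    rw [Finset.sum_congr rfl e, claimA]
    have hs : (i + 1).sign = -1 := Int.sign_eq_neg_one_of_neg (by omega)
    rw [hs, neg_one_mul, neg_smul]

/-! ### Bilinearity lemmas -/

lemma tmul_single (i j a b : ℤ) :
    tmul (Finsupp.single i a) (Finsupp.single j b) = (a * b) • thMulB i j := by
  unfold tmul
  rw [Finsupp.sum_single_index (by simp), Finsupp.sum_single_index (by simp)]

lemma tmul_zero_left (y : ℤ →₀ ℤ) : tmul 0 y = 0 := by
  unfold tmul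
  rw [Finsupp.sum_zero_index]

lemma tmul_zero_right (x : ℤ →₀ ℤ) : tmul x 0 = 0 := by
  unfold tmul
  simp [Finsupp.sum_zero_index]

lemma tmul_add_left (x₁ x₂ y : ℤ →₀ ℤ) :
    tmul (x₁ + x₂) y = tmul x₁ y + tmul x₂ y := by
  unfold tmul
  apply Finsupp.sum_add_index' (by simp)
  intro i a₁ a₂
  rw [← Finsupp.sum_add]
  apply Finsupp.sum_congr
  intro j _
  rw [add_mul, add_smul]

lemma tmul_add_right (x y₁ y₂ : ℤ →₀ ℤ) :
    tmul x (y₁ + y₂) = tmul x y₁ + tmul x y₂ := by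
  unfold tmul
  rw [← Finsupp.sum_add]
  apply Finsupp.sum_congr
  intro i _
  apply Finsupp.sum_add_index' (by simp)
  intro j b₁ b₂
  rw [mul_add, add_smul]

lemma hmul_single (i j : ℕ) (a b : ℤ) :
    hmul (Finsupp.single i a) (Finsupp.single j b) = (a * b) • hMulB i j := by
  unfold hmul
  rw [Finsupp.sum_single_index (by simp), Finsupp.sum_single_index (by simp)]

lemma hmul_zero_left (y : ℕ →₀ ℤ) : hmul 0 y = 0 := by
  unfold hmul
  rw [Finsupp.sum_zero_index]

lemma hmul_zero_right (x : ℕ →₀ ℤ) : hmul x 0 = 0 := by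
  unfold hmul
  simp [Finsupp.sum_zero_index]

lemma hmul_add_left (x₁ x₂ y : ℕ →₀ ℤ) :
    hmul (x₁ + x₂) y = hmul x₁ y + hmul x₂ y := by
  unfold hmul
  apply Finsupp.sum_add_index' (by simp)
  intro i a₁ a₂
  rw [← Finsupp.sum_add]
  apply Finsupp.sum_congr
  intro j _
  rw [add_mul, add_smul]

lemma hmul_add_right (x y₁ y₂ : ℕ →₀ ℤ) :
    hmul x (y₁ + y₂) = hmul x y₁ + hmul x y₂ := by
  unfold hmul
  rw [← Finsupp.sum_add]
  apply Finsupp.sum_congr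
  intro i _
  apply Finsupp.sum_add_index' (by simp)
  intro j b₁ b₂
  rw [mul_add, add_smul]

theorem Lmap_mul (x y : ℤ →₀ ℤ) : Lmap (tmul x y) = hmul (Lmap x) (Lmap y) := by
  induction x using Finsupp.induction_linear with
  | zero => rw [tmul_zero_left, Lmap_zero, hmul_zero_left]
  | add f g hf hg => rw [tmul_add_left, Lmap_add, Lmap_add, hmul_add_left, hf, hg]
  | single i a =>
    induction y using Finsupp.induction_linear with
    | zero => rw [tmul_zero_right, Lmap_zero, hmul_zero_right]
    | add f g hf hg => rw [tmul_add_right, Lmap_add, Lmap_add, hmul_add_right, hf, hg]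
    | single j b =>
      rw [tmul_single, Lmap_smul, key, Lmap_single, Lmap_single, hmul_single, smul_smul]
      congr 1
      ring
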